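/- Let d ≥ 2 and let σ_1, σ_2, …, σ_{2d} be facets of ∂C_d^*, with indices read modulo 2d, such that |σ_i ∩ σ_{i+1}| = d−1 for all i and σ_{i+d} = α(σ_i) for all i. Then: (1) there is an enumeration u_1, …, u_d of the d vertices of σ_1 such that σ_{i+1} = (σ_i \ {u_i}) ∪ {α(u_i)} for every 1 ≤ i ≤ d; (2) the facets σ_1, …, σ_{2d} are pairwise distinct; and (3) there exists a bijection φ : V_d → V_d with φ ∘ α = α ∘ φ that maps the 2d facets of B(1,d) bijectively onto {σ_1, …, σ_{2d}}, so the complex generated by σ_1, …, σ_{2d} is simplicially isomorphic to B(1,d). -/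

import Mathlib

namespace SpherePaper

/-- Vertices of `∂C_d^*`: `(i, false)` plays the role of `x_i` and `(i, true)` of `y_i`,
with the cyclic index convention `x_{d+k} = x_k` built in via `ZMod d`. -/
abbrev Vtx (d : ℕ) := ZMod d × Bool

/-- The vertex `x_k`. -/
def xv (d k : ℕ) : Vtx d := ((k : ZMod d), false)

/-- The vertex `y_k`. -/
def yv (d k : ℕ) : Vtx d := ((k : ZMod d), true)

/-- The antipodal map `α`, sending `x_k ↦ y_k` and `y_k ↦ x_k`. -/
def alphaV (d : ℕ) (v : Vtx d) : Vtx d := (v.1, !v.2)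

/-- The facet `τ_j^k = {y_k, …, y_{k+j-1}} ∪ {x_{k+j}, …, x_{k+d-1}}` of `∂C_d^*`. -/
def tau (d j k : ℕ) : Finset (Vtx d) :=
  (Finset.range d).image fun t => (((k + t : ℕ) : ZMod d), decide (t < j))

/-- The complex `Γ_j` generated by the facets `τ_j^k`, `1 ≤ k ≤ d`. -/
def Gamma (d j : ℕ) : Set (Finset (Vtx d)) :=
  {F | ∃ k, 1 ≤ k ∧ k ≤ d ∧ F ⊆ tau d j k}

/-- The `n`-th facet `σ_n` of `B(1,d)` (indices read periodically mod `2d`):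
`σ_i = {x_1,…,x_i, y_{i+1},…,y_d}` and `σ_{d+i} = {y_1,…,y_i, x_{i+1},…,x_d}`
for `1 ≤ i ≤ d`. -/
def sigB (d n : ℕ) : Finset (Vtx d) :=
  if (n - 1) % (2 * d) + 1 ≤ d then
    (Finset.range d).image fun t =>
      (((t + 1 : ℕ) : ZMod d), decide ((n - 1) % (2 * d) + 1 < t + 1))
  else
    (Finset.range d).image fun t =>
      (((t + 1 : ℕ) : ZMod d), decide (t + 1 ≤ (n - 1) % (2 * d) + 1 - d))

/-- `F` is a facet (an inclusion-maximal face) of the complex `C`. -/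
def IsFacetOf {α : Type*} (C : Set (Finset α)) (F : Finset α) : Prop :=
  F ∈ C ∧ ∀ G ∈ C, F ⊆ G → F = G

/-- Let `d ≥ 2` and let `σ_1, …, σ_{2d}` be facets of `∂C_d^*` (indices read
mod `2d`, encoded by periodicity of `σ : ℕ → Finset (Vtx d)`) with `|σ_i ∩ σ_{i+1}| = d-1`
and `σ_{i+d} = α(σ_i)` for all `i`. Then: (1) there is an enumeration `u_1, …, u_d` of the
vertices of `σ_1` with `σ_{i+1} = (σ_i \ {u_i}) ∪ {α(u_i)}` for `1 ≤ i ≤ d`; (2) the facets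
`σ_1, …, σ_{2d}` are pairwise distinct; (3) there is a bijection `φ` of the vertex set
commuting with `α` that maps the `2d` facets of `B(1,d)` bijectively onto `{σ_1, …, σ_{2d}}`,
so the complex generated by the `σ_i` is simplicially isomorphic to `B(1,d)`. -/
theorem statement3 (d : ℕ) (hd : 2 ≤ d)
    (σ : ℕ → Finset (Vtx d))
    (hper : ∀ i, σ (i + 2 * d) = σ i)
    (hfacet : ∀ i, (∀ r : ZMod d, ¬ (((r, false) ∈ σ i) ∧ ((r, true) ∈ σ i))) ∧
      (σ i).card = d)
    (hadj : ∀ i, (σ i ∩ σ (i + 1)).card = d - 1)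
    (hanti : ∀ i, σ (i + d) = (σ i).image (alphaV d)) :
    (∃ u : ℕ → Vtx d,
      ((Finset.Icc 1 d).image u = σ 1) ∧
      (∀ a ∈ Finset.Icc 1 d, ∀ b ∈ Finset.Icc 1 d, u a = u b → a = b) ∧
      (∀ i, 1 ≤ i → i ≤ d →
        σ (i + 1) = insert (alphaV d (u i)) ((σ i).erase (u i)))) ∧
    (∀ i j, 1 ≤ i → i ≤ 2 * d → 1 ≤ j → j ≤ 2 * d → σ i = σ j → i = j) ∧
    (∃ φ : Vtx d → Vtx d, Function.Bijective φ ∧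
      φ ∘ alphaV d = alphaV d ∘ φ ∧
      (∀ F : Finset (Vtx d),
        (∃ n, 1 ≤ n ∧ n ≤ 2 * d ∧ F = (sigB d n).image φ) ↔
          (∃ n, 1 ≤ n ∧ n ≤ 2 * d ∧ F = σ n)) ∧
      (∀ G : Finset (Vtx d),
        (∃ F : Finset (Vtx d),
            (∃ n, 1 ≤ n ∧ n ≤ 2 * d ∧ F ⊆ sigB d n) ∧ G = F.image φ) ↔
          (∃ n, 1 ≤ n ∧ n ≤ 2 * d ∧ G ⊆ σ n))) := by
  haveI : NeZero d := ⟨by omega⟩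
  classical
  have hsurj : ∀ i r, ∃ b, (r, b) ∈ σ i := by
    intro i r
    have hinj : Set.InjOn Prod.fst ((σ i : Finset (ZMod d × Bool)) : Set (ZMod d × Bool)) := by
      rintro ⟨r1, b1⟩ h1 ⟨r2, b2⟩ h2 h12
      simp only [Finset.mem_coe] at h1 h2
      simp only at h12
      subst h12
      cases b1 <;> cases b2 <;> first
        | rfl
        | exact absurd ⟨‹_›, ‹_›⟩ ((hfacet i).1 r1)
    have himg : (σ i).image Prod.fst = Finset.univ := by
      apply Finset.eq_univ_of_card
      rw [Finset.card_image_of_injOn hinj, (hfacet i).2, ZMod.card]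
    have : r ∈ (σ i).image Prod.fst := by rw [himg]; exact Finset.mem_univ r
    obtain ⟨⟨r', b⟩, hmem, hfst⟩ := Finset.mem_image.mp this
    exact ⟨b, by simpa [← hfst] using hmem⟩
  obtain ⟨F, hmem⟩ : ∃ F : ℕ → ZMod d → Bool, ∀ i r b, ((r, b) ∈ σ i) ↔ F i r = b := by
    refine ⟨fun i r => decide ((r, true) ∈ σ i), fun i r b => ?_⟩
    cases b
    · simp only [decide_eq_false_iff_not]
      constructor
      · intro h ht
        exact (hfacet i).1 r ⟨h, ht⟩
      · intro h
        obtain ⟨b, hb⟩ := hsurj i r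
        cases b
        · exact hb
        · exact absurd hb h
    · simp
  have hrep : ∀ i, σ i = Finset.univ.image (fun r => (r, F i r)) := by
    intro i
    ext ⟨r, b⟩
    simp only [Finset.mem_image, Finset.mem_univ, true_and, Prod.mk.injEq, hmem]
    constructor
    · intro h; exact ⟨r, rfl, h⟩
    · rintro ⟨s, rfl, h⟩; exact h
  -- flip coordinate
  have hflip : ∀ i, ∃ a, ∀ s, (F i s ≠ F (i+1) s ↔ s = a) := by
    intro i
    have h1 : σ i ∩ σ (i+1) =
        (Finset.univ.filter fun r => F i r = F (i+1) r).image (fun r => (r, F i r)) := by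
      ext ⟨r, b⟩
      simp only [Finset.mem_inter, hmem, Finset.mem_image, Finset.mem_filter,
        Finset.mem_univ, true_and, Prod.mk.injEq]
      constructor
      · rintro ⟨hb1, hb2⟩
        exact ⟨r, hb1.trans hb2.symm, rfl, hb1⟩
      · rintro ⟨s, hs, rfl, rfl⟩
        exact ⟨rfl, hs.symm⟩
    have h2 : (Finset.univ.filter fun r => F i r = F (i+1) r).card = d - 1 := by
      have := hadj i
      rw [h1, Finset.card_image_of_injOn (fun a _ b _ hab => (Prod.mk.injEq _ _ _ _ ▸ hab).1)] at this
      exact this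
    have h3 : (Finset.univ.filter fun r => ¬ (F i r = F (i+1) r)).card = 1 := by
      have := Finset.card_filter_add_card_filter_not
        (s := (Finset.univ : Finset (ZMod d))) (fun r => F i r = F (i+1) r)
      rw [h2, Finset.card_univ, ZMod.card] at this
      omega
    obtain ⟨a0, ha0⟩ := Finset.card_eq_one.mp h3
    refine ⟨a0, fun s => ?_⟩
    have hm0 : s ∈ Finset.univ.filter (fun r => ¬ (F i r = F (i+1) r)) ↔ s ∈ ({a0} : Finset (ZMod d)) := by
      rw [ha0]
    simp only [Finset.mem_filter, Finset.mem_univ, true_and, Finset.mem_singleton] at hm0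
    exact hm0
  choose c hc using hflip
  have hstep_eq : ∀ i, F (i+1) (c i) = !(F i (c i)) := by
    intro i
    have h := (hc i (c i)).mpr rfl
    cases h1 : F i (c i) <;> cases h2 : F (i+1) (c i) <;> simp_all
  have hstep_ne : ∀ i s, s ≠ c i → F (i+1) s = F i s := by
    intro i s hs
    have h : ¬ (F i s ≠ F (i+1) s) := fun hne => hs ((hc i s).mp hne)
    cases h1 : F i s <;> cases h2 : F (i+1) s <;> simp_all
  have hantiF : ∀ i r, F (i + d) r = !(F i r) := by
    intro i r
    have h1 : ((r, true) ∈ σ (i+d)) ↔ (r, false) ∈ σ i := by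
      rw [hanti i]
      simp only [Finset.mem_image, alphaV, Prod.mk.injEq]
      constructor
      · rintro ⟨⟨s, b⟩, hmem', h1, h2⟩
        simp only at h1 h2
        subst h1
        cases b
        · exact hmem'
        · simp at h2
      · intro h
        exact ⟨(r, false), h, rfl, rfl⟩
    rw [hmem, hmem] at h1
    cases h2 : F i r <;> cases h3 : F (i+d) r <;> simp_all
  have hcper : ∀ i, c (i + d) = c i := by
    intro i
    have h : F (i+d) (c i) ≠ F (i+d+1) (c i) := by
      rw [hantiF, show i+d+1 = (i+1)+d by ring, hantiF]
      have := (hc i (c i)).mpr rfl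
      cases h1 : F i (c i) <;> cases h2 : F (i+1) (c i) <;> simp_all
    exact ((hc (i+d) (c i)).mp h).symm
  have hcmod : ∀ i, c i = c (i % d) := by
    intro i
    induction i using Nat.strong_induction_on with
    | _ i ih =>
      rcases lt_or_ge i d with h | h
      · rw [Nat.mod_eq_of_lt h]
      · obtain ⟨j, rfl⟩ : ∃ j, i = j + d := ⟨i - d, by omega⟩
        rw [hcper j, ih j (by omega), Nat.add_mod_right]
  have hpar : ∀ i k r, (F (i+k) r = F i r ↔
      Even (((Finset.Ico i (i+k)).filter (fun j => c j = r)).card)) := by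
    intro i k r
    induction k with
    | zero => simp
    | succ k ih =>
      have hico : Finset.Ico i (i+k+1) = insert (i+k) (Finset.Ico i (i+k)) :=
        Nat.Ico_succ_right_eq_insert_Ico (by omega)
      rw [show i+(k+1) = (i+k)+1 from rfl, hico, Finset.filter_insert]
      by_cases h : c (i+k) = r
      · subst h
        rw [if_pos rfl, Finset.card_insert_of_notMem (by simp), hstep_eq (i+k),
          Nat.even_add_one, ← ih]
        cases h1 : F (i+k) (c (i+k)) <;> cases h2 : F i (c (i+k)) <;> simp
      · rw [if_neg h, hstep_ne (i+k) r (fun hr => h (hr ▸ rfl)), ih]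
  have hwin : ∀ i r, ((Finset.Ico i (i+d)).filter (fun j => c j = r)).card = 1 := by
    intro i r
    have hge : ∀ s : ZMod d, 1 ≤ ((Finset.Ico i (i+d)).filter (fun j => c j = s)).card := by
      intro s
      rcases Nat.eq_zero_or_pos ((Finset.Ico i (i+d)).filter (fun j => c j = s)).card with h | h
      · exfalso
        have h2 := (hpar i d s).mpr (by rw [h]; exact Even.zero)
        rw [hantiF] at h2
        exact Bool.not_ne_self _ h2
      · exact h
    have hsum : ∑ s : ZMod d, ((Finset.Ico i (i+d)).filter (fun j => c j = s)).card = d := by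
      rw [← Finset.card_eq_sum_card_fiberwise (fun j _ => Finset.mem_univ (c j))]
      simp
    by_contra hne
    have h2 : 2 ≤ ((Finset.Ico i (i+d)).filter (fun j => c j = r)).card := by
      have := hge r; omega
    have hlt : ∑ _s : ZMod d, 1 < ∑ s : ZMod d, ((Finset.Ico i (i+d)).filter (fun j => c j = s)).card :=
      Finset.sum_lt_sum (fun s _ => hge s) ⟨r, Finset.mem_univ r, by omega⟩
    rw [hsum] at hlt
    simp only [Finset.sum_const, smul_eq_mul, mul_one, Finset.card_univ, ZMod.card] at hlt
    omega
  have hcinj : ∀ i j j', i ≤ j → j < i + d → i ≤ j' → j' < i + d → c j = c j' → j = j' := by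
    intro i j j' h1 h2 h3 h4 hcc
    by_contra hne
    have hsub : ({j, j'} : Finset ℕ) ⊆ (Finset.Ico i (i+d)).filter (fun t => c t = c j') := by
      intro x hx
      simp only [Finset.mem_insert, Finset.mem_singleton] at hx
      rcases hx with rfl | rfl <;>
        simp only [Finset.mem_filter, Finset.mem_Ico] <;> exact ⟨⟨by omega, by omega⟩, by simp [hcc]⟩
    have h5 := Finset.card_le_card hsub
    rw [hwin, Finset.card_pair hne] at h5
    omega

  -- part 1
  have hpart1c : ∀ i, 1 ≤ i → i ≤ d → F i (c i) = F 1 (c i) := by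
    intro i h1 h2
    have hemp : ((Finset.Ico 1 (1+(i-1))).filter (fun j => c j = c i)).card = 0 := by
      rw [Finset.card_eq_zero, Finset.filter_eq_empty_iff]
      intro j hj
      simp only [Finset.mem_Ico] at hj
      intro hcc
      have := hcinj 1 j i (by omega) (by omega) h1 (by omega) hcc
      omega
    have h3 := (hpar 1 (i-1) (c i)).mpr (by rw [hemp]; exact Even.zero)
    rwa [show 1 + (i-1) = i by omega] at h3
  have hstepσ : ∀ i, σ (i+1) = insert (c i, !(F i (c i))) ((σ i).erase (c i, F i (c i))) := by
    intro i
    ext ⟨r, b⟩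
    simp only [Finset.mem_insert, Finset.mem_erase, hmem, Prod.mk.injEq, ne_eq, not_and]
    by_cases hr : r = c i
    · subst hr
      rw [hstep_eq i]
      cases h1 : F i (c i) <;> cases b <;> simp
    · rw [hstep_ne i r hr]
      simp [hr]
  -- part 2
  have hdiff1 : ∀ i k, 1 ≤ k → k < d → F (i+k) (c i) ≠ F i (c i) := by
    intro i k h1 h2 heq
    have hfil : (Finset.Ico i (i+k)).filter (fun j => c j = c i) = {i} := by
      ext j
      simp only [Finset.mem_filter, Finset.mem_Ico, Finset.mem_singleton]
      constructor
      · rintro ⟨⟨hj1, hj2⟩, hcc⟩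
        exact hcinj i j i hj1 (by omega) le_rfl (by omega) hcc
      · rintro rfl
        exact ⟨⟨le_rfl, by omega⟩, rfl⟩
    have h3 := (hpar i k (c i)).mp heq
    rw [hfil] at h3
    simp at h3
  have part2 : ∀ i j, 1 ≤ i → i ≤ 2*d → 1 ≤ j → j ≤ 2*d → σ i = σ j → i = j := by
    have key : ∀ i j, 1 ≤ i → j ≤ 2*d → i < j → σ i ≠ σ j := by
      intro i j hi hj hij heq
      have hFeq : ∀ r, F j r = F i r := by
        intro r
        have h1 : (r, F i r) ∈ σ i := (hmem _ _ _).mpr rfl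
        rw [heq] at h1
        exact (hmem _ _ _).mp h1
      obtain ⟨k, rfl⟩ : ∃ k, j = i + k := ⟨j - i, by omega⟩
      have hk1 : 1 ≤ k := by omega
      have hk2 : k ≤ 2*d - 1 := by omega
      rcases lt_trichotomy k d with h | h | h
      · exact hdiff1 i k hk1 h (hFeq (c i))
      · have h4 := hantiF i (0 : ZMod d)
        have h5 := hFeq (0 : ZMod d)
        rw [h] at h5
        rw [h5] at h4
        exact Bool.not_ne_self _ h4.symm
      · have hex : ∃ r : ZMod d, (Finset.Ico i (i + (k-d))).filter (fun t => c t = r) = ∅ := by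
          by_contra hno
          push_neg at hno
          have hsub : (Finset.univ : Finset (ZMod d)) ⊆ (Finset.Ico i (i+(k-d))).image c := by
            intro r _
            obtain ⟨j', hj'⟩ := (hno r)
            simp only [Finset.mem_filter] at hj'
            exact Finset.mem_image.mpr ⟨j', hj'.1, hj'.2⟩
          have hc1 := Finset.card_le_card hsub
          have hc2 := Finset.card_image_le (s := Finset.Ico i (i+(k-d))) (f := c)
          rw [Finset.card_univ, ZMod.card] at hc1
          rw [Nat.card_Ico] at hc2
          omega
        obtain ⟨r, hr⟩ := hex
        have h0 : F (i + (k-d)) r = F i r := (hpar i (k-d) r).mpr (by rw [hr]; simp)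
        have h1 : F (i+k) r = !(F (i + (k-d)) r) := by
          rw [show i + k = (i + (k-d)) + d by omega]
          exact hantiF _ r
        rw [h0, hFeq r] at h1
        exact Bool.not_ne_self _ h1.symm
    intro i j hi1 hi2 hj1 hj2 heq
    rcases lt_trichotomy i j with h | h | h
    · exact absurd heq (key i j hi1 hj2 h)
    · exact h
    · exact absurd heq.symm (key j i hj1 hi2 h)
  -- part 3
  have hDnot : ∀ (A B : Prop) [inst1 : Decidable A] [inst2 : Decidable B],
      (A ↔ ¬ B) → (decide A = !decide B) := by
    intro A B _ _ h
    rw [decide_eq_decide.mpr h, decide_not]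
  have hDeq : ∀ (A B : Prop) [inst1 : Decidable A] [inst2 : Decidable B],
      (A ↔ B) → (decide A = decide B) := fun A B _ _ h => decide_eq_decide.mpr h
  obtain ⟨K, hK1, hKcast, hKval⟩ : ∃ K : ZMod d → ℕ,
      (∀ r, 1 ≤ K r ∧ K r ≤ d) ∧ (∀ r, ((K r : ℕ) : ZMod d) = r) ∧
      (∀ m : ℕ, 1 ≤ m → m ≤ d → K ((m : ℕ) : ZMod d) = m) := by
    refine ⟨fun r => if r = 0 then d else r.val, ?_, ?_, ?_⟩
    · intro r
      dsimp only
      by_cases h : r = 0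
      · rw [if_pos h]; omega
      · rw [if_neg h]
        have h1 : r.val < d := ZMod.val_lt r
        have h2 : r.val ≠ 0 := fun h0 => h ((ZMod.val_eq_zero r).mp h0)
        omega
    · intro r
      dsimp only
      by_cases h : r = 0
      · rw [if_pos h, h, ZMod.natCast_self]
      · rw [if_neg h]
        exact ZMod.natCast_rightInverse r
    · intro m h1 h2
      dsimp only
      rcases eq_or_lt_of_le h2 with h | h
      · subst h
        rw [if_pos (by rw [ZMod.natCast_self])]
      · have hv : ((m : ℕ) : ZMod d).val = m := ZMod.val_cast_of_lt h
        have hne : ((m : ℕ) : ZMod d) ≠ 0 := by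
          intro h0
          rw [h0, ZMod.val_zero] at hv
          omega
        rw [if_neg hne, hv]
  have hKcast2 : ∀ m : ℕ, 1 ≤ m → m ≤ 2*d → K ((m : ℕ) : ZMod d) = if m ≤ d then m else m - d := by
    intro m h1 h2
    by_cases h : m ≤ d
    · rw [if_pos h]; exact hKval m h1 h
    · rw [if_neg h]
      have hcast : ((m : ℕ) : ZMod d) = ((m - d : ℕ) : ZMod d) := by
        conv_lhs => rw [show m = (m - d) + d by omega]
        push_cast
        simp [ZMod.natCast_self]
      rw [hcast]
      exact hKval (m - d) (by omega) (by omega)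
  obtain ⟨sB, hsB⟩ : ∃ sB : ℕ → ZMod d → Bool,
      ∀ n r, sB n r = if n ≤ d then decide (n < K r) else decide (K r ≤ n - d) :=
    ⟨_, fun _ _ => rfl⟩
  have hsigB : ∀ n, 1 ≤ n → n ≤ 2*d →
      sigB d n = Finset.univ.image (fun r => (r, sB n r)) := by
    intro n h1 h2
    have hmod : (n - 1) % (2*d) + 1 = n := by
      rw [Nat.mod_eq_of_lt (by omega)]; omega
    have hbij : (Finset.univ : Finset (ZMod d)) =
        (Finset.range d).image (fun t => ((t+1 : ℕ) : ZMod d)) := by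
      symm
      apply Finset.eq_univ_of_card
      rw [Finset.card_image_of_injOn, Finset.card_range, ZMod.card]
      intro a ha b hb hab
      simp only [Finset.mem_coe, Finset.mem_range] at ha hb
      have h3 := hKval (a+1) (by omega) (by omega)
      have h4 := hKval (b+1) (by omega) (by omega)
      dsimp only at hab
      rw [hab] at h3
      omega
    rw [hbij, Finset.image_image]
    simp only [sigB, hmod]
    by_cases h : n ≤ d
    · rw [if_pos h]
      apply Finset.image_congr
      intro t ht
      simp only [Finset.mem_coe, Finset.mem_range] at ht
      simp only [Function.comp_apply]
      rw [hsB, if_pos h, hKval (t+1) (by omega) (by omega)]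
    · rw [if_neg h]
      apply Finset.image_congr
      intro t ht
      simp only [Finset.mem_coe, Finset.mem_range] at ht
      simp only [Function.comp_apply]
      rw [hsB, if_neg h, hKval (t+1) (by omega) (by omega)]
  have hBflip : ∀ n, 1 ≤ n → n < 2*d → ∀ r,
      sB (n+1) r = (if r = ((n+1 : ℕ) : ZMod d) then !(sB n r) else sB n r) := by
    intro n h1 h2 r
    obtain ⟨hb1, hb2⟩ := hK1 r
    have hm0 := hKcast2 (n+1) (by omega) (by omega)
    have hKiff : r = ((n+1 : ℕ) : ZMod d) ↔ K r = (if n+1 ≤ d then n+1 else n+1-d) := by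
      constructor
      · intro h; rw [h, hm0]
      · intro h
        calc r = ((K r : ℕ) : ZMod d) := (hKcast r).symm
        _ = ((n+1 : ℕ) : ZMod d) := by rw [h, ← hm0, hKcast]
    rw [hsB, hsB]
    by_cases ha : n + 1 ≤ d
    · rw [if_pos ha, if_pos (show n ≤ d by omega)]
      rw [if_pos ha] at hKiff
      by_cases hr : r = ((n+1 : ℕ) : ZMod d)
      · rw [if_pos hr]
        have hKr := hKiff.mp hr
        exact hDnot _ _ (by omega)
      · rw [if_neg hr]
        have hKr : K r ≠ n+1 := fun h => hr (hKiff.mpr h)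
        exact hDeq _ _ (by omega)
    · rw [if_neg ha]
      rw [if_neg ha] at hKiff
      by_cases hb' : n ≤ d
      · rw [if_pos hb']
        by_cases hr : r = ((n+1 : ℕ) : ZMod d)
        · rw [if_pos hr]
          have hKr := hKiff.mp hr
          exact hDnot _ _ (by omega)
        · rw [if_neg hr]
          have hKr : K r ≠ n+1-d := fun h => hr (hKiff.mpr h)
          exact hDeq _ _ (by omega)
      · rw [if_neg hb']
        by_cases hr : r = ((n+1 : ℕ) : ZMod d)
        · rw [if_pos hr]
          have hKr := hKiff.mp hr
          exact hDnot _ _ (by omega)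
        · rw [if_neg hr]
          have hKr : K r ≠ n+1-d := fun h => hr (hKiff.mpr h)
          exact hDeq _ _ (by omega)
  obtain ⟨p, hpdef⟩ : ∃ p : ZMod d → ZMod d, ∀ m, p m = c ((m - 1).val) :=
    ⟨_, fun _ => rfl⟩
  have hpinj : Function.Injective p := by
    intro a b hab
    rw [hpdef, hpdef] at hab
    have h1 : (a-1).val = (b-1).val := by
      refine hcinj 0 _ _ (Nat.zero_le _) ?_ (Nat.zero_le _) ?_ hab
      · simpa using ZMod.val_lt (a-1)
      · simpa using ZMod.val_lt (b-1)
    have h2 : a - 1 = b - 1 := ZMod.val_injective d h1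
    have h3 := congrArg (fun x => x + 1) h2
    simpa using h3
  have hpbij : Function.Bijective p := (Finite.injective_iff_bijective).mp hpinj
  have hpc : ∀ n : ℕ, p ((n+1 : ℕ) : ZMod d) = c n := by
    intro n
    rw [hpdef]
    have h1 : (((n+1 : ℕ) : ZMod d) - 1) = ((n : ℕ) : ZMod d) := by push_cast; ring
    rw [h1, ZMod.val_natCast]
    exact (hcmod n).symm
  have hinv : ∀ n, 1 ≤ n → n ≤ 2*d → ∀ r,
      Bool.xor (sB n r) (F n (p r)) = Bool.xor (sB 1 r) (F 1 (p r)) := by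
    intro n
    induction n with
    | zero => intro h; omega
    | succ n ih =>
      intro h1 h2 r
      rcases Nat.lt_or_ge n 1 with h | h
      · have hn0 : n = 0 := by omega
        subst hn0
        rfl
      · rw [← ih h (by omega) r, hBflip n h (by omega) r]
        by_cases hr : r = ((n+1 : ℕ) : ZMod d)
        · rw [if_pos hr]
          have hpr : p r = c n := by rw [hr, hpc]
          rw [hpr, hstep_eq n]
          cases sB n r <;> cases F n (c n) <;> rfl
        · rw [if_neg hr]
          have hne : p r ≠ c n := fun h' => hr (hpinj (h'.trans (hpc n).symm))
          rw [hstep_ne n (p r) hne]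
  obtain ⟨φ, hφdef⟩ : ∃ φ : (ZMod d × Bool) → (ZMod d × Bool),
      ∀ v, φ v = (p v.1, Bool.xor v.2 (Bool.xor (sB 1 v.1) (F 1 (p v.1)))) :=
    ⟨_, fun _ => rfl⟩
  have hφbij : Function.Bijective φ := by
    rw [← Finite.injective_iff_bijective]
    rintro ⟨r1, b1⟩ ⟨r2, b2⟩ hab
    rw [hφdef, hφdef] at hab
    simp only [Prod.mk.injEq] at hab
    obtain ⟨h1, h2⟩ := hab
    have h1x : r1 = r2 := hpinj h1
    subst h1x
    have hb : b1 = b2 := by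
      revert h2
      cases b1 <;> cases b2 <;> cases sB 1 r1 <;> cases F 1 (p r1) <;> decide
    rw [hb]
  have hφcomm : φ ∘ (alphaV d) = (alphaV d) ∘ φ := by
    funext v
    obtain ⟨r, b⟩ := v
    simp only [Function.comp_apply, alphaV, hφdef]
    cases b <;> cases sB 1 r <;> cases F 1 (p r) <;> rfl
  have hM : ∀ n, 1 ≤ n → n ≤ 2*d → (sigB d n).image φ = σ n := by
    intro n h1 h2
    rw [hsigB n h1 h2, Finset.image_image, hrep n]
    have hpuniv : Finset.univ.image p = (Finset.univ : Finset (ZMod d)) :=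
      Finset.image_univ_of_surjective hpbij.surjective
    conv_rhs => rw [← hpuniv, Finset.image_image]
    apply Finset.image_congr
    intro r _
    simp only [Function.comp_apply, hφdef]
    have hx := hinv n h1 h2 r
    have : Bool.xor (sB n r) (Bool.xor (sB 1 r) (F 1 (p r))) = F n (p r) := by
      revert hx
      cases sB n r <;> cases F n (p r) <;> cases sB 1 r <;> cases F 1 (p r) <;> decide
    rw [this]
  refine ⟨⟨fun i => (c i, F i (c i)), ?_, ?_, ?_⟩, part2, φ, hφbij, hφcomm, ?_, ?_⟩
  · apply Finset.eq_of_subset_of_card_le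
    · intro v hv
      obtain ⟨i, hi, rfl⟩ := Finset.mem_image.mp hv
      simp only [Finset.mem_Icc] at hi
      rw [hpart1c i hi.1 hi.2]
      exact (hmem 1 (c i) _).mpr rfl
    · rw [(hfacet 1).2, Finset.card_image_of_injOn, Nat.card_Icc]
      · omega
      · intro a ha b hb hab
        simp only [Finset.mem_coe, Finset.mem_Icc] at ha hb
        exact hcinj 1 a b (by omega) (by omega) (by omega) (by omega) (congrArg Prod.fst hab)
  · intro a ha b hb hab
    simp only [Finset.mem_Icc] at ha hb
    exact hcinj 1 a b (by omega) (by omega) (by omega) (by omega) (congrArg Prod.fst hab)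
  · intro i h1 h2
    exact hstepσ i
  · intro Fs
    constructor
    · rintro ⟨n, h1, h2, rfl⟩
      exact ⟨n, h1, h2, hM n h1 h2⟩
    · rintro ⟨n, h1, h2, rfl⟩
      exact ⟨n, h1, h2, (hM n h1 h2).symm⟩
  · intro G
    constructor
    · rintro ⟨Fs, ⟨n, h1, h2, hsub⟩, rfl⟩
      refine ⟨n, h1, h2, ?_⟩
      rw [← hM n h1 h2]
      exact Finset.image_subset_image hsub
    · rintro ⟨n, h1, h2, hsub⟩
      refine ⟨G.image (Equiv.ofBijective φ hφbij).symm, ⟨n, h1, h2, ?_⟩, ?_⟩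
      · intro x hx
        obtain ⟨g, hg, rfl⟩ := Finset.mem_image.mp hx
        have hgσ := hsub hg
        rw [← hM n h1 h2] at hgσ
        obtain ⟨s, hs, rfl⟩ := Finset.mem_image.mp hgσ
        rw [show (Equiv.ofBijective φ hφbij).symm (φ s) = s from
          Equiv.ofBijective_symm_apply_apply _ _ s]
        exact hs
      · rw [Finset.image_image]
        ext g
        simp only [Finset.mem_image, Function.comp_apply]
        constructor
        · intro hg
          exact ⟨g, hg, Equiv.ofBijective_apply_symm_apply φ hφbij g⟩
        · rintro ⟨g2, hg2, rfl⟩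
          rw [Equiv.ofBijective_apply_symm_apply φ hφbij g2]
          exact hg2


end SpherePaper
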